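/- arXiv:2111.05606 — 2 statements merged into one kernel-verified Lean document; each statement's English description precedes it below -/
import Mathlib

section
/- Andréief's identity: for functions f_1,…,f_N and g_1,…,g_N in L^2(E, ω), the integral over E^N of det(f_j(x_i))_{i,j=1}^N · det(g_j(x_i))_{i,j=1}^N with respect to dω(x_1)⋯dω(x_N) equals N! times det(∫_E f_i(x) g_j(x) dω(x))_{i,j=1}^N. -/
open MeasureTheory

open Equiv Equiv.Perm in
lemma sum_perm_sign_prod {n : ℕ} (M : Matrix (Fin n) (Fin n) ℂ) :
    ∑ σ : Equiv.Perm (Fin n), ∑ τ : Equiv.Perm (Fin n),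
      (((Equiv.Perm.sign σ : ℤ) : ℂ) * ((Equiv.Perm.sign τ : ℤ) : ℂ)) *
        ∏ i, M (σ i) (τ i)
    = (Nat.factorial n : ℂ) * M.det := by
  have h : ∀ σ : Equiv.Perm (Fin n),
      ∑ τ : Equiv.Perm (Fin n),
        (((Equiv.Perm.sign σ : ℤ) : ℂ) * ((Equiv.Perm.sign τ : ℤ) : ℂ)) *
          ∏ i, M (σ i) (τ i) = M.det := by
    intro σ
    rw [← Equiv.sum_comp (Equiv.mulRight σ)]
    have hdet : M.det = ∑ τ : Equiv.Perm (Fin n),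
        ((Equiv.Perm.sign τ : ℤ) : ℂ) * ∏ i, M i (τ i) := by
      rw [← Matrix.det_transpose, Matrix.det_apply']
      rfl
    rw [hdet]
    refine Finset.sum_congr rfl fun τ _ => ?_
    have h1 : ∏ i, M (σ i) ((Equiv.mulRight σ τ) i) = ∏ i, M i (τ i) := by
      simpa using Equiv.prod_comp σ (fun j => M j (τ j))
    rw [h1]
    congr 1
    have : Equiv.Perm.sign (Equiv.mulRight σ τ) = Equiv.Perm.sign τ * Equiv.Perm.sign σ := by
      simp [Equiv.Perm.sign_mul]
    rw [this]
    push_cast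
    rcases Int.units_eq_one_or (Equiv.Perm.sign σ) with h | h <;> rw [h] <;> norm_num
  simp_rw [h]
  simp [Finset.card_univ, Fintype.card_perm, Fintype.card_fin]

/-- Andréief's identity. For measurable functions `f₁,…,f_N, g₁,…,g_N`
with all products `f_i·g_j` integrable, the integral over `E^N` of the product of the two
determinants `det(f_j(x_i))·det(g_j(x_i))` equals `N!·det(∫ f_i g_j dω)`. -/
theorem andreief_identity
    {E : Type*} [MeasurableSpace E] (ω : Measure E) [SigmaFinite ω]
    (N : ℕ) (f g : Fin N → E → ℂ)
    (hf : ∀ i, Measurable (f i)) (hg : ∀ j, Measurable (g j))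
    (hint : ∀ i j, Integrable (fun x => f i x * g j x) ω) :
    (∫ x : Fin N → E,
        Matrix.det (Matrix.of fun i j : Fin N => f j (x i)) *
          Matrix.det (Matrix.of fun i j : Fin N => g j (x i))
        ∂(Measure.pi fun _ => ω))
      = (Nat.factorial N : ℂ) *
          Matrix.det (Matrix.of fun i j : Fin N => ∫ x, f i x * g j x ∂ω) := by
  letI : MeasureSpace E := ⟨ω⟩
  haveI : SigmaFinite (volume : Measure E) := ‹SigmaFinite ω›
  have hpi : (Measure.pi fun _ : Fin N => ω) = (volume : Measure (Fin N → E)) :=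
    (MeasureTheory.volume_pi).symm
  rw [hpi]
  have key : ∀ x : Fin N → E,
      Matrix.det (Matrix.of fun i j : Fin N => f j (x i)) *
        Matrix.det (Matrix.of fun i j : Fin N => g j (x i))
      = ∑ σ : Equiv.Perm (Fin N), ∑ τ : Equiv.Perm (Fin N),
          ((((Equiv.Perm.sign σ : ℤ) : ℂ) * ((Equiv.Perm.sign τ : ℤ) : ℂ)) *
            ∏ i, (f (σ i) (x i) * g (τ i) (x i))) := by
    intro x
    rw [← Matrix.det_transpose (Matrix.of fun i j : Fin N => f j (x i)),
        ← Matrix.det_transpose (Matrix.of fun i j : Fin N => g j (x i)),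
        Matrix.det_apply', Matrix.det_apply', Finset.sum_mul_sum]
    refine Finset.sum_congr rfl fun σ _ => Finset.sum_congr rfl fun τ _ => ?_
    simp only [Matrix.transpose_apply, Matrix.of_apply, Finset.prod_mul_distrib]
    ring
  simp_rw [key]
  rw [integral_finset_sum]
  · have inner : ∀ σ : Equiv.Perm (Fin N),
        ∫ x : Fin N → E, ∑ τ : Equiv.Perm (Fin N),
          ((((Equiv.Perm.sign σ : ℤ) : ℂ) * ((Equiv.Perm.sign τ : ℤ) : ℂ)) *
            ∏ i, (f (σ i) (x i) * g (τ i) (x i)))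
        = ∑ τ : Equiv.Perm (Fin N),
          ((((Equiv.Perm.sign σ : ℤ) : ℂ) * ((Equiv.Perm.sign τ : ℤ) : ℂ)) *
            ∏ i, ∫ x : E, f (σ i) x * g (τ i) x) := by
      intro σ
      rw [integral_finset_sum]
      · refine Finset.sum_congr rfl fun τ _ => ?_
        rw [integral_const_mul]
        congr 1
        exact MeasureTheory.integral_fintype_prod_eq_prod (ι := Fin N)
          (fun i y => f (σ i) y * g (τ i) y)
      · intro τ _
        exact (Integrable.fintype_prod (fun i => hint (σ i) (τ i))).const_mul _
    simp_rw [inner]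
    exact sum_perm_sign_prod (Matrix.of fun i j : Fin N => ∫ x, f i x * g j x ∂ω)
  · intro σ _
    apply integrable_finset_sum
    intro τ _
    exact (Integrable.fintype_prod (fun i => hint (σ i) (τ i))).const_mul _
end

section
/- Generalized Giambelli formula: let (h_{r,s})_{r∈ℤ, s≥0} be a family of commuting indeterminates with h_{0,s} = 1 for all s ≥ 0 and h_{r,s} = 0 for all r < 0, s ≥ 0. For a Young diagram λ with N ≥ ℓ(λ), define s̃_λ = det(h_{λ_i−i+j, j−1})_{i,j=1}^N. Then, if λ = (p_1,…,p_d | q_1,…,q_d) in Frobenius notation, s̃_λ = det(s̃_{(p_i|q_j)})_{i,j=1}^d, and this value is independent of the choice of N ≥ ℓ(λ). -/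
/-- Generalized hook "Schur function" built from a doubly-indexed family
`h : ℤ → ℕ → R` via the generalized Jacobi–Trudi determinant
`s̃_{(p|q)} = det(h_{λ_i-i+j, j-1})` of size `q+1`, for the hook `(p|q) = (p+1, 1^q)`
(indices `0`-indexed, so the second index of the `(i,j)` entry is `j`). -/
noncomputable def genHookSchur {R : Type*} [CommRing R] (h : ℤ → ℕ → R) (p q : ℕ) : R :=
  Matrix.det (Matrix.of fun i j : Fin (q + 1) =>
    h ((if (i : ℕ) = 0 then (p : ℤ) + 1 else 1) - (i : ℕ) + (j : ℕ)) (j : ℕ))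

open Matrix Equiv Finset

namespace GG

set_option linter.unusedVariables false
set_option linter.deprecated false

variable {R : Type*} [CommRing R]

def JT (h : ℤ → ℕ → R) (lam : ℕ → ℕ) (n : ℕ) : Matrix (Fin n) (Fin n) R :=
  Matrix.of fun i j : Fin n => h ((lam i : ℤ) - (i : ℕ) + (j : ℕ)) (j : ℕ)

theorem pad (h : ℤ → ℕ → R) (h0 : ∀ s : ℕ, h 0 s = 1)
    (hneg : ∀ r : ℤ, r < 0 → ∀ s : ℕ, h r s = 0) (lam : ℕ → ℕ)
    (n : ℕ) (hlen : ∀ i, n ≤ i → lam i = 0) :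
    ∀ M, n ≤ M → (JT h lam M).det = (JT h lam n).det := by
  intro M
  induction M with
  | zero => intro hM; have : n = 0 := Nat.le_zero.mp hM; subst this; rfl
  | succ m ih =>
    intro hM
    rcases Nat.lt_or_ge n (m+1) with hlt | hge
    · have hnm : n ≤ m := by omega
      rw [← ih hnm]
      rw [Matrix.det_succ_row (JT h lam (m+1)) (Fin.last m)]
      rw [Finset.sum_eq_single (Fin.last m)]
      · have hl : lam m = 0 := hlen m hnm
        have e1 : (JT h lam (m+1)) (Fin.last m) (Fin.last m) = 1 := by
          simp [JT, Fin.last, hl, h0]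
        have e2 : (-1 : R) ^ ((Fin.last m : ℕ) + (Fin.last m : ℕ)) = 1 := by
          rw [Fin.val_last]; exact Even.neg_one_pow ⟨m, rfl⟩
        rw [e1, e2, one_mul, one_mul]
        congr 1
        ext i j
        simp [JT, Fin.succAbove_last]
      · intro j _ hj
        have hjm : (j : ℕ) < m := by
          have := j.isLt
          have : (j : ℕ) ≠ m := fun hh => hj (Fin.ext (by simp [Fin.last, hh]))
          omega
        have hz : (JT h lam (m+1)) (Fin.last m) j = 0 := by
          have hl : lam m = 0 := hlen m hnm
          apply hneg
          simp only [JT, Matrix.of_apply, Fin.val_last, hl, Nat.cast_zero]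
          omega
        rw [hz, mul_zero, zero_mul]
      · intro hmem; exact absurd (Finset.mem_univ _) hmem
    · have : n = m + 1 := by omega
      subst this; rfl


def cPerm (K d : ℕ) : ℕ → Equiv.Perm (Fin K)
  | 0 => 1
  | s+1 => (if h : d + s + 1 < K then
      Equiv.swap ⟨d+s, by omega⟩ ⟨d+s+1, h⟩ else (1 : Equiv.Perm (Fin K))) * cPerm K d s

/-- the value function of `cPerm`. -/
def cVal (d s x : ℕ) : ℕ :=
  if x = d ∧ s ≠ 0 then d + s else if d < x ∧ x ≤ d + s then x - 1 else x

theorem cPerm_sign (d : ℕ) : ∀ s, d + s < K →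
    Equiv.Perm.sign (cPerm K d s) = (-1) ^ s := by
  intro s
  induction s with
  | zero => intro _; simp [cPerm]
  | succ s ih =>
    intro hs
    have hd : d + s + 1 < K := by omega
    rw [cPerm, dif_pos hd, _root_.map_mul, ih (by omega)]
    rw [Equiv.Perm.sign_swap (by simp [Fin.ext_iff])]
    rw [pow_succ, mul_comm]

theorem cPerm_eval (d : ℕ) : ∀ s, d + s < K → ∀ x : Fin K,
    (cPerm K d s x : ℕ) = cVal d s (x : ℕ) := by
  intro s
  induction s with
  | zero =>
    intro _ x
    simp only [cPerm, cVal]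
    have : ¬((x:ℕ) = d ∧ (0:ℕ) ≠ 0) := by omega
    rw [if_neg this, if_neg (by omega)]
    rfl
  | succ s ih =>
    intro hs x
    have hd : d + s + 1 < K := by omega
    rw [cPerm, dif_pos hd]
    have hx := ih (by omega) x
    rcases Nat.lt_or_ge s 0 with h|_
    · omega
    · show ((Equiv.swap (⟨d+s, by omega⟩ : Fin K) ⟨d+s+1, hd⟩) (cPerm K d s x) : ℕ) = _
      rcases eq_or_ne ((cPerm K d s x : Fin K) : ℕ) (d+s) with he | hne
      · rw [show (cPerm K d s x : Fin K) = ⟨d+s, by omega⟩ from Fin.ext he,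
          Equiv.swap_apply_left]
        simp only [cVal] at hx ⊢
        split_ifs at hx ⊢ <;> omega
      · rcases eq_or_ne ((cPerm K d s x : Fin K) : ℕ) (d+s+1) with he2 | hne2
        · rw [show (cPerm K d s x : Fin K) = ⟨d+s+1, hd⟩ from Fin.ext he2,
            Equiv.swap_apply_right]
          simp only [cVal] at hx ⊢
          split_ifs at hx ⊢ <;> omega
        · rw [Equiv.swap_apply_of_ne_of_ne (fun hh => hne (by rw [hh]))
            (fun hh => hne2 (by rw [hh]))]
          simp only [cVal] at hx ⊢
          split_ifs at hx ⊢ <;> omega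


theorem cPerm_inv_eval {K : ℕ} (d s : ℕ) (hds : d + s < K) (x : Fin K) :
    (((cPerm K d s)⁻¹ x : Fin K) : ℕ) =
      if (x:ℕ) = d + s ∧ s ≠ 0 then d
      else if d ≤ (x:ℕ) ∧ (x:ℕ) < d + s then (x:ℕ)+1 else (x:ℕ) := by
  have key : ∀ y : Fin K, cPerm K d s y = x → ((cPerm K d s)⁻¹ x : ℕ) = y := by
    intro y hy
    rw [← hy, Equiv.Perm.inv_def, Equiv.symm_apply_apply]
  split_ifs with h1 h2
  · refine key ⟨d, by omega⟩ (Fin.ext ?_)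
    rw [cPerm_eval d s hds]
    show cVal d s d = (x:ℕ)
    unfold cVal
    split_ifs <;> omega
  · refine key ⟨(x:ℕ)+1, by omega⟩ (Fin.ext ?_)
    rw [cPerm_eval d s hds]
    show cVal d s ((x:ℕ)+1) = (x:ℕ)
    unfold cVal
    split_ifs <;> omega
  · refine key x (Fin.ext ?_)
    rw [cPerm_eval d s hds]
    unfold cVal
    split_ifs <;> omega

theorem sign_sorted {K : ℕ} : ∀ (d : ℕ) (f : Equiv.Perm (Fin K)) (q : Fin d → ℕ),
    (∀ a b : Fin d, a < b → q b < q a) →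
    (∀ b : Fin d, q b + (b : ℕ) < K) →
    (∀ (x : Fin K) (hx : (x : ℕ) < d), (f x : ℕ) = q ⟨(x : ℕ), hx⟩) →
    (∀ x y : Fin K, d ≤ (x : ℕ) → x < y → f x < f y) →
    Equiv.Perm.sign f = (-1) ^ (∑ b, q b) := by
  intro d
  induction d with
  | zero =>
    intro f q _ _ _ hf2
    have hsm : StrictMono f := fun x y hxy => hf2 x y (Nat.zero_le _) hxy
    have hfid : (f : Fin K → Fin K) = id := by
      refine (hsm.range_inj strictMono_id).mp ?_
      rw [Set.range_id]
      exact f.surjective.range_eq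
    have : f = 1 := Equiv.ext fun x => congrFun hfid x
    rw [this]
    simp
  | succ d ih =>
    intro f q hq hqK hf1 hf2
    set s : ℕ := q (Fin.last d) with hs_def
    have hds : d + s < K := by
      have := hqK (Fin.last d)
      simp only [Fin.val_last] at this
      omega
    have hdK : d < K := by omega
    have hsK : s < K := by omega
    -- f ⟨d⟩ = s
    have hfd : (f ⟨d, hdK⟩ : ℕ) = s := by
      rw [hf1 ⟨d, hdK⟩ (by simp)]
      congr 1
    -- values below d+1 are ≥ s
    have hgeS : ∀ x : Fin K, (x:ℕ) < d + 1 → s ≤ (f x : ℕ) := by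
      intro x hx
      rw [hf1 x hx]
      rcases eq_or_lt_of_le (Fin.le_last (⟨(x:ℕ), hx⟩ : Fin (d+1))) with he | hlt
      · rw [he]
      · exact le_of_lt (hq _ _ hlt)
    -- the set of x with f x < s
    set T : Finset (Fin K) := Finset.univ.filter (fun x : Fin K => (f x : ℕ) < s) with hT_def
    have cardT : T.card = s := by
      have h1 : T.card = (Finset.Iio (⟨s, hsK⟩ : Fin K)).card := by
        apply Finset.card_bij (fun x _ => f x)
        · intro x hx
          simp only [hT_def, Finset.mem_filter] at hx
          simp [Finset.mem_Iio, Fin.lt_def, hx.2]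
        · intro x hx y hy hxy
          exact f.injective hxy
        · intro y hy
          refine ⟨f⁻¹ y, ?_, by simp⟩
          simp only [hT_def, Finset.mem_filter]
          refine ⟨Finset.mem_univ _, ?_⟩
          rw [Equiv.Perm.inv_def, Equiv.apply_symm_apply]
          simpa [Fin.lt_def] using hy
      rw [h1, Fin.card_Iio]
    have hTsub : ∀ x ∈ T, d + 1 ≤ (x : ℕ) := by
      intro x hx
      simp only [hT_def, Finset.mem_filter] at hx
      by_contra hc
      exact absurd (hgeS x (by omega)) (by omega)
    have hT : T = Finset.Ioc (⟨d, hdK⟩ : Fin K) ⟨d + s, hds⟩ := by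
      have hsub : T ⊆ Finset.Ioc (⟨d, hdK⟩ : Fin K) ⟨d + s, hds⟩ := by
        intro x hx
        have hx1 := hTsub x hx
        simp only [hT_def, Finset.mem_filter] at hx
        rw [Finset.mem_Ioc]
        constructor
        · rw [Fin.lt_def]; simpa using by omega
        · -- x ≤ d + s
          by_contra hc
          rw [Fin.le_def, not_le] at hc
          simp only at hc
          -- then Ioc ⟨d⟩ x ⊆ T has card x - d > s
          have hsub2 : Finset.Ioc (⟨d, hdK⟩ : Fin K) x ⊆ T := by
            intro y hy
            rw [Finset.mem_Ioc, Fin.lt_def, Fin.le_def] at hy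
            simp only [hT_def, Finset.mem_filter]
            refine ⟨Finset.mem_univ _, ?_⟩
            rcases eq_or_lt_of_le hy.2 with he | hlt
            · have : y = x := Fin.ext he
              rw [this]; exact hx.2
            · have hyd : d < (y:ℕ) := by simpa using hy.1
              have : (f y : ℕ) < (f x : ℕ) := hf2 y x (by omega) hlt
              omega
          have := Finset.card_le_card hsub2
          rw [Fin.card_Ioc, cardT] at this
          simp only at this
          omega
      apply Finset.eq_of_subset_of_card_le hsub
      rw [Fin.card_Ioc, cardT]
      simp
    have hlow : ∀ x : Fin K, d < (x:ℕ) → (x:ℕ) ≤ d + s → (f x : ℕ) < s := by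
      intro x h1 h2
      have : x ∈ T := by
        rw [hT, Finset.mem_Ioc, Fin.lt_def, Fin.le_def]
        exact ⟨by simpa using h1, by simpa using h2⟩
      simp only [hT_def, Finset.mem_filter] at this
      exact this.2
    have hhigh : ∀ x : Fin K, d + s < (x:ℕ) → s < (f x : ℕ) := by
      intro x h1
      have hne : x ∉ T := by
        rw [hT, Finset.mem_Ioc]
        intro hc
        rw [Fin.le_def] at hc
        have := hc.2
        simp only at this
        omega
      simp only [hT_def, Finset.mem_filter, Finset.mem_univ, true_and, not_lt] at hne
      rcases eq_or_lt_of_le hne with he | hlt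
      · exfalso
        have : f x = f ⟨d, hdK⟩ := Fin.ext (by omega)
        have := f.injective this
        rw [Fin.ext_iff] at this
        simp only at this
        omega
      · exact hlt
    -- the cycle and π'
    set c := cPerm K d s with hc_def
    set g : Equiv.Perm (Fin K) := f * c⁻¹ with hg_def
    have hgval : ∀ x : Fin K, g x = f (c⁻¹ x) := fun x => rfl
    -- apply ih to g
    have hsign_g : Equiv.Perm.sign g = (-1) ^ (∑ b : Fin d, q b.castSucc) := by
      apply ih g (fun b => q b.castSucc)
      · intro a b hab
        exact hq _ _ (by rwa [Fin.lt_def] at hab ⊢)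
      · intro b
        have := hqK b.castSucc
        simpa using this
      · intro x hx
        have hcx : c⁻¹ x = x := by
          apply Fin.ext
          rw [cPerm_inv_eval d s hds]
          split_ifs <;> omega
        rw [hgval, hcx, hf1 x (by omega)]
        congr 1
      · intro x y hx hxy
        rw [Fin.lt_def]
        -- zone analysis
        have hxval := cPerm_inv_eval d s hds x
        have hyval := cPerm_inv_eval d s hds y
        rw [hgval, hgval]
        have hxy' : (x:ℕ) < (y:ℕ) := hxy
        have hyd : d ≤ (y : ℕ) := by omega
        -- zones for x
        rcases lt_trichotomy ((x:ℕ)) (d+s) with hxA | hxB | hxC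
        · -- x in zone A : c⁻¹ x = x+1, f value < s
          have hcx : ((c⁻¹ x : Fin K) : ℕ) = (x:ℕ) + 1 := by rw [hxval]; split_ifs <;> omega
          have hfx : (f (c⁻¹ x) : ℕ) < s := by
            apply hlow
            · omega
            · omega
          rcases lt_trichotomy ((y:ℕ)) (d+s) with hyA | hyB | hyC
          · have hcy : ((c⁻¹ y : Fin K) : ℕ) = (y:ℕ) + 1 := by rw [hyval]; split_ifs <;> omega
            have : f (c⁻¹ x) < f (c⁻¹ y) := by
              apply hf2 _ _ (by omega) (by rw [Fin.lt_def]; omega)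
            rwa [Fin.lt_def] at this
          · have hcy : ((c⁻¹ y : Fin K) : ℕ) = d := by rw [hyval]; split_ifs <;> omega
            have : (f (c⁻¹ y) : ℕ) = s := by
              have : (c⁻¹ y : Fin K) = ⟨d, hdK⟩ := Fin.ext hcy
              rw [this, hfd]
            omega
          · have hcy : ((c⁻¹ y : Fin K) : ℕ) = (y:ℕ) := by rw [hyval]; split_ifs <;> omega
            have : s < (f (c⁻¹ y) : ℕ) := by
              apply hhigh
              omega
            omega
        · -- x = d + s (so s ≠ 0 or x = d); c⁻¹ x = d, f value = s
          have hcx : ((c⁻¹ x : Fin K) : ℕ) = d := by rw [hxval]; split_ifs <;> omega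
          have hfx : (f (c⁻¹ x) : ℕ) = s := by
            have : (c⁻¹ x : Fin K) = ⟨d, hdK⟩ := Fin.ext hcx
            rw [this, hfd]
          have hcy : ((c⁻¹ y : Fin K) : ℕ) = (y:ℕ) := by rw [hyval]; split_ifs <;> omega
          have : s < (f (c⁻¹ y) : ℕ) := by apply hhigh; omega
          omega
        · -- x > d+s: c⁻¹ x = x, value > s
          have hcx : ((c⁻¹ x : Fin K) : ℕ) = (x:ℕ) := by rw [hxval]; split_ifs <;> omega
          have hcy : ((c⁻¹ y : Fin K) : ℕ) = (y:ℕ) := by rw [hyval]; split_ifs <;> omega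
          have : f (c⁻¹ x) < f (c⁻¹ y) := by
            apply hf2
            · omega
            · rw [Fin.lt_def]; omega
          rwa [Fin.lt_def] at this
    -- conclude
    have hfg : f = g * c := by rw [hg_def, inv_mul_cancel_right]
    rw [hfg, _root_.map_mul, hsign_g, cPerm_sign d s hds]
    rw [Fin.sum_univ_castSucc, pow_add]


/-- product of the transpositions `(inl b, inr (q b))` for `b < e`. -/
def swapProd (q : Fin dd → Fin K) : ℕ → Equiv.Perm (Fin dd ⊕ Fin K)
  | 0 => 1
  | e+1 => (if h : e < dd then
      Equiv.swap (Sum.inl ⟨e, h⟩) (Sum.inr (q ⟨e, h⟩)) else 1) * swapProd q e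


theorem swapProd_sign (q : Fin dd → Fin K) : ∀ e, e ≤ dd →
    Equiv.Perm.sign (swapProd q e) = (-1) ^ e := by
  intro e
  induction e with
  | zero => intro _; simp [swapProd]
  | succ e ih =>
    intro he
    have h : e < dd := by omega
    rw [swapProd, dif_pos h, _root_.map_mul, ih (by omega),
      Equiv.Perm.sign_swap (by simp), pow_succ, mul_comm]

theorem swapProd_inl (q : Fin dd → Fin K) (hq : Function.Injective q) :
    ∀ e, e ≤ dd → ∀ b : Fin dd,
    swapProd q e (Sum.inl b) = if (b:ℕ) < e then Sum.inr (q b) else Sum.inl b := by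
  intro e
  induction e with
  | zero => intro _ b; simp [swapProd]
  | succ e ih =>
    intro he b
    have h : e < dd := by omega
    have hve : ((⟨e, h⟩ : Fin dd) : ℕ) = e := rfl
    rw [swapProd, dif_pos h]
    show (Equiv.swap (Sum.inl ⟨e, h⟩) (Sum.inr (q ⟨e, h⟩))) (swapProd q e (Sum.inl b)) = _
    rw [ih (by omega) b]
    rcases Nat.lt_trichotomy (b:ℕ) e with hbe | hbe | hbe
    · rw [if_pos hbe, if_pos (by omega)]
      apply Equiv.swap_apply_of_ne_of_ne
      · simp
      · simp only [ne_eq, Sum.inr.injEq]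
        intro hc
        have := hq hc
        rw [Fin.ext_iff] at this
        omega
    · rw [if_neg (by omega), if_pos (by omega)]
      have : b = ⟨e, h⟩ := Fin.ext hbe
      rw [this, Equiv.swap_apply_left]
    · rw [if_neg (by omega), if_neg (by omega)]
      apply Equiv.swap_apply_of_ne_of_ne
      · simp only [ne_eq, Sum.inl.injEq]
        intro hc
        rw [Fin.ext_iff] at hc
        omega
      · simp

theorem swapProd_inr_nomem (q : Fin dd → Fin K) (hq : Function.Injective q) :
    ∀ e, e ≤ dd → ∀ i : Fin K, (∀ b : Fin dd, (b:ℕ) < e → q b ≠ i) →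
    swapProd q e (Sum.inr i) = Sum.inr i := by
  intro e
  induction e with
  | zero => intro _ i _; simp [swapProd]
  | succ e ih =>
    intro he i hi
    have h : e < dd := by omega
    have hve : ((⟨e, h⟩ : Fin dd) : ℕ) = e := rfl
    rw [swapProd, dif_pos h]
    show (Equiv.swap (Sum.inl ⟨e, h⟩) (Sum.inr (q ⟨e, h⟩))) (swapProd q e (Sum.inr i)) = _
    rw [ih (by omega) i (fun b hb => hi b (by omega))]
    apply Equiv.swap_apply_of_ne_of_ne
    · simp
    · simp only [ne_eq, Sum.inr.injEq]
      exact fun hc => hi ⟨e, h⟩ (by omega) hc.symm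

theorem swapProd_inr_mem (q : Fin dd → Fin K) (hq : Function.Injective q) :
    ∀ e, e ≤ dd → ∀ b : Fin dd, (b:ℕ) < e →
    swapProd q e (Sum.inr (q b)) = Sum.inl b := by
  intro e
  induction e with
  | zero => intro _ b hb; omega
  | succ e ih =>
    intro he b hb
    have h : e < dd := by omega
    have hve : ((⟨e, h⟩ : Fin dd) : ℕ) = e := rfl
    rw [swapProd, dif_pos h]
    show (Equiv.swap (Sum.inl ⟨e, h⟩) (Sum.inr (q ⟨e, h⟩))) (swapProd q e (Sum.inr (q b))) = _
    rcases Nat.lt_trichotomy (b:ℕ) e with hbe | hbe | hbe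
    · rw [ih (by omega) b hbe]
      apply Equiv.swap_apply_of_ne_of_ne
      · simp only [ne_eq, Sum.inl.injEq]
        intro hc
        rw [Fin.ext_iff] at hc
        omega
      · simp
    · have hbeq : b = ⟨e, h⟩ := Fin.ext hbe
      have hfix : swapProd q e (Sum.inr (q b)) = Sum.inr (q b) := by
        apply swapProd_inr_nomem q hq e (by omega)
        intro b' hb' hc
        have := hq hc
        rw [Fin.ext_iff] at this
        omega
      rw [hfix, hbeq, Equiv.swap_apply_right]
    · omega


theorem bazin {dd K : ℕ} (C : Matrix (Fin K) (Fin K) R) (hC : C.det = 1)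
    (q : Fin dd → Fin K) (hq : Function.Injective q)
    (v : Fin dd → Fin K → R) (D : Matrix (Fin K) (Fin K) R)
    (hD1 : ∀ b, D (q b) = v b)
    (hD2 : ∀ i, (∀ b, q b ≠ i) → D i = C i) :
    Matrix.det (Matrix.of fun a b : Fin dd => (C.updateRow (q b) (v a)).det) = D.det := by
  classical
  set V : Matrix (Fin dd) (Fin K) R := Matrix.of fun a j => v a j with hV
  set S : Matrix (Fin K) (Fin dd) R := Matrix.of fun i b => if q b = i then 1 else 0 with hS
  set M : Matrix (Fin dd ⊕ Fin K) (Fin dd ⊕ Fin K) R := fromBlocks 0 V S C with hM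
  set ρ : Equiv.Perm (Fin dd ⊕ Fin K) := swapProd q dd with hρ
  -- step 1 : row-permuted M is block triangular with D in the corner
  have step1 : M.submatrix ρ id = fromBlocks 1 (Matrix.of fun b j => C (q b) j) 0 D := by
    ext x y
    rw [Matrix.submatrix_apply, id]
    cases x with
    | inl b =>
      have hx : ρ (Sum.inl b) = Sum.inr (q b) := by
        rw [hρ, swapProd_inl q hq dd le_rfl, if_pos b.isLt]
      rw [hx]
      cases y with
      | inl b' =>
        show S (q b) b' = _
        rw [Matrix.fromBlocks_apply₁₁, hS]
        simp only [Matrix.of_apply, Matrix.one_apply]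
        by_cases hbb : b = b'
        · rw [if_pos (by rw [hbb]), if_pos hbb]
        · rw [if_neg (fun hc => hbb (hq hc).symm), if_neg hbb]
      | inr j =>
        show C (q b) j = _
        rw [Matrix.fromBlocks_apply₁₂]
        rfl
    | inr i =>
      by_cases hmem : ∃ b, q b = i
      · obtain ⟨b, hb⟩ := hmem
        have hx : ρ (Sum.inr i) = Sum.inl b := by
          rw [hρ, ← hb, swapProd_inr_mem q hq dd le_rfl b b.isLt]
        rw [hx]
        cases y with
        | inl b' =>
          show (0 : Matrix (Fin dd) (Fin dd) R) b b' = _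
          rw [Matrix.fromBlocks_apply₂₁]
          rfl
        | inr j =>
          show V b j = _
          rw [Matrix.fromBlocks_apply₂₂, hV, ← hb]
          simp only [Matrix.of_apply]
          rw [hD1 b]
      · push_neg at hmem
        have hx : ρ (Sum.inr i) = Sum.inr i := by
          rw [hρ, swapProd_inr_nomem q hq dd le_rfl i (fun b _ => hmem b)]
        rw [hx]
        cases y with
        | inl b' =>
          show S i b' = _
          rw [Matrix.fromBlocks_apply₂₁, hS]
          simp only [Matrix.of_apply]
          rw [if_neg (hmem b')]
          rfl
        | inr j =>
          show C i j = _
          rw [Matrix.fromBlocks_apply₂₂, hD2 i hmem]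
  -- step 2 : M.det = (-1)^dd * D.det
  have hsign : Equiv.Perm.sign ρ = (-1 : ℤˣ) ^ dd := swapProd_sign q dd le_rfl
  have hperm := Matrix.det_permute ρ M
  rw [step1, Matrix.det_fromBlocks_zero₂₁, Matrix.det_one, one_mul, hsign] at hperm
  have hcast : (((-1 : ℤˣ) ^ dd : ℤˣ) : ℤ) = (-1 : ℤ) ^ dd := by push_cast; ring
  have hperm' : D.det = (-1 : R) ^ dd * M.det := by
    rw [hperm]
    norm_cast
  have hsq : (-1 : R) ^ dd * (-1 : R) ^ dd = 1 := by
    rw [← pow_add]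
    exact Even.neg_one_pow ⟨dd, rfl⟩
  have hMdet : M.det = (-1 : R) ^ dd * D.det := by
    rw [hperm', ← mul_assoc, hsq, one_mul]
  -- step 3 : Schur complement
  haveI : Invertible C := C.invertibleOfIsUnitDet (by rw [hC]; exact isUnit_one)
  have step3 : M.det = ((0 : Matrix (Fin dd) (Fin dd) R) - V * ⅟C * S).det := by
    rw [hM, Matrix.det_fromBlocks₂₂, hC, one_mul]
  have hinv : (⅟C : Matrix (Fin K) (Fin K) R) = C.adjugate := by
    rw [Matrix.invOf_eq_nonsing_inv, Matrix.inv_def, hC, Ring.inverse_one, one_smul]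
  have step4 : M.det = (-1 : R) ^ dd * (V * C.adjugate * S).det := by
    rw [step3, zero_sub, hinv, Matrix.det_neg]
    simp
  -- step 5 : entries of V * adj C * S
  have entry : V * C.adjugate * S = Matrix.of fun a b : Fin dd =>
      (C.updateRow (q b) (v a)).det := by
    ext a b
    rw [Matrix.mul_apply]
    rw [Finset.sum_eq_single (q b)]
    · rw [Matrix.mul_apply, hS]
      simp only [Matrix.of_apply, if_pos rfl, mul_one]
      rw [← Matrix.cramer_transpose_apply, Matrix.cramer_eq_adjugate_mulVec,
        ← Matrix.adjugate_transpose]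
      rw [Matrix.mulVec]
      simp only [dotProduct, Matrix.transpose_apply, hV, Matrix.of_apply]
      simp only [if_true, mul_one]
      apply Finset.sum_congr rfl
      intro j _
      ring
    · intro i _ hne
      rw [hS]
      simp only [Matrix.of_apply]
      rw [if_neg (fun hc => hne hc.symm), mul_zero]
    · intro hc
      exact absurd (Finset.mem_univ _) hc
  rw [← entry]
  have h5 : (-1:R)^dd * (V * C.adjugate * S).det = (-1:R)^dd * D.det := by
    rw [← step4, hMdet]
  calc (V * C.adjugate * S).det
      = ((-1:R)^dd * (-1:R)^dd) * (V * C.adjugate * S).det := by rw [hsq, one_mul]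
    _ = (-1:R)^dd * ((-1:R)^dd * (V * C.adjugate * S).det) := by rw [mul_assoc]
    _ = (-1:R)^dd * ((-1:R)^dd * D.det) := by rw [h5]
    _ = D.det := by rw [← mul_assoc, hsq, one_mul]


/-- the unitriangular core matrix -/
def core {R : Type*} [CommRing R] (h : ℤ → ℕ → R) (K : ℕ) : Matrix (Fin K) (Fin K) R :=
  Matrix.of fun i j : Fin K => h ((j : ℕ) - (i : ℕ) : ℤ) (j : ℕ)

theorem core_det {R : Type*} [CommRing R] (h : ℤ → ℕ → R) (h0 : ∀ s : ℕ, h 0 s = 1)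
    (hneg : ∀ r : ℤ, r < 0 → ∀ s : ℕ, h r s = 0) (K : ℕ) : (core h K).det = 1 := by
  rw [Matrix.det_of_upperTriangular]
  · apply Finset.prod_eq_one
    intro i _
    show h ((i : ℕ) - (i : ℕ) : ℤ) (i : ℕ) = 1
    rw [sub_self, h0]
  · intro i j hij
    apply hneg
    have : (j:ℕ) < (i:ℕ) := hij
    omega

/-- row vector for a hook -/
def vRow {R : Type*} [CommRing R] (h : ℤ → ℕ → R) (K : ℕ) (p : ℕ) : Fin K → R :=
  fun j => h ((p : ℤ) + 1 + (j : ℕ)) (j : ℕ)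

theorem hook_eq {R : Type*} [CommRing R] {N : ℕ} (h : ℤ → ℕ → R)
    (h0 : ∀ s : ℕ, h 0 s = 1) (hneg : ∀ r : ℤ, r < 0 → ∀ s : ℕ, h r s = 0)
    (p q : ℕ) (hqN : q < N) :
    genHookSchur h p q =
      (-1:R)^q * ((core h N).updateRow ⟨q, hqN⟩ (vRow h N p)).det := by
  classical
  set lamH : ℕ → ℕ := fun i => if i = 0 then p + 1 else if i ≤ q then 1 else 0 with hlamH
  have e1 : genHookSchur h p q = (JT h lamH (q+1)).det := by
    unfold genHookSchur JT
    congr 1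
    ext i j
    simp only [Matrix.of_apply]
    congr 2
    by_cases hi : (i:ℕ) = 0
    · rw [hi, hlamH]
      simp
    · have hle : (i:ℕ) ≤ q := by have := i.isLt; omega
      rw [hlamH]
      simp only [hi, if_neg hi, if_pos hle]
      norm_num
  have e2 : (JT h lamH (q+1)).det = (JT h lamH N).det := by
    rw [pad h h0 hneg lamH (q+1) ?_ N (by omega)]
    intro i hi
    rw [hlamH]
    simp only
    rw [if_neg (by omega), if_neg (by omega)]
  have e3 : JT h lamH N =
      ((core h N).updateRow ⟨q, hqN⟩ (vRow h N p)).submatrix (cPerm N 0 q) id := by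
    ext i j
    rw [Matrix.submatrix_apply, id]
    have hcv : ((cPerm N 0 q i : Fin N) : ℕ) = cVal 0 q (i:ℕ) := cPerm_eval 0 q (by omega) i
    by_cases hi0 : (i:ℕ) = 0
    · have : cVal 0 q (i:ℕ) = q := by
        rw [hi0]
        unfold cVal
        split_ifs <;> omega
      have hc : (cPerm N 0 q i : Fin N) = ⟨q, hqN⟩ := Fin.ext (by rw [hcv, this])
      rw [hc, Matrix.updateRow_self]
      show h ((lamH (i:ℕ) : ℤ) - (i:ℕ) + (j:ℕ)) (j:ℕ) = vRow h N p j
      rw [hlamH, vRow]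
      simp only [hi0, if_pos rfl]
      norm_num
    · by_cases hiq : (i:ℕ) ≤ q
      · have hval : cVal 0 q (i:ℕ) = (i:ℕ) - 1 := by
          unfold cVal
          split_ifs <;> omega
        have hne : (cPerm N 0 q i : Fin N) ≠ ⟨q, hqN⟩ := by
          rw [Fin.ne_iff_vne, hcv, hval]
          simp only
          omega
        rw [Matrix.updateRow_ne hne]
        show h ((lamH (i:ℕ) : ℤ) - (i:ℕ) + (j:ℕ)) (j:ℕ) =
          h (((j:ℕ) : ℤ) - ((cPerm N 0 q i : Fin N) : ℕ)) (j:ℕ)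
        rw [hlamH]
        simp only [if_neg hi0, if_pos hiq]
        congr 1
        rw [hcv, hval]
        have h1 : 1 ≤ (i:ℕ) := by omega
        push_cast [Nat.cast_sub h1]
        ring
      · have hval : cVal 0 q (i:ℕ) = (i:ℕ) := by
          unfold cVal
          split_ifs <;> omega
        have hne : (cPerm N 0 q i : Fin N) ≠ ⟨q, hqN⟩ := by
          rw [Fin.ne_iff_vne, hcv, hval]
          simp only
          omega
        rw [Matrix.updateRow_ne hne]
        show h ((lamH (i:ℕ) : ℤ) - (i:ℕ) + (j:ℕ)) (j:ℕ) =
          h (((j:ℕ) : ℤ) - ((cPerm N 0 q i : Fin N) : ℕ)) (j:ℕ)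
        rw [hlamH]
        simp only [if_neg hi0, if_neg hiq]
        congr 1
        rw [hcv, hval]
        push_cast
        ring
  have e4 := Matrix.det_permute (cPerm N 0 q) ((core h N).updateRow ⟨q, hqN⟩ (vRow h N p))
  rw [cPerm_sign 0 q (by omega)] at e4
  rw [e1, e2, e3, e4]
  norm_cast


end GG

open GG in
/-- generalized Giambelli formula. Let `(h_{r,s})_{r∈ℤ,s≥0}` be elements of
a commutative ring with `h_{0,s} = 1` and `h_{r,s} = 0` for `r < 0`.  For a Young diagram
`λ` (antitone `lam : ℕ → ℕ`, `0`-indexed) with `d` diagonal boxes, Frobenius coordinates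
`P`, `Q`, and `N, N' ≥ ℓ(λ)`, the generalized Jacobi–Trudi determinant
`s̃_λ = det(h_{λ_i-i+j, j-1})_{i,j=1}^N` satisfies `s̃_λ = det(s̃_{(p_i|q_j)})_{i,j=1}^d`,
and is independent of the choice of `N ≥ ℓ(λ)`. -/
theorem generalized_giambelli_formula
    {R : Type*} [CommRing R] (h : ℤ → ℕ → R)
    (h0 : ∀ s : ℕ, h 0 s = 1) (hneg : ∀ r : ℤ, r < 0 → ∀ s : ℕ, h r s = 0)
    (lam : ℕ → ℕ) (hmono : Antitone lam)
    (N : ℕ) (hlen : ∀ i, N ≤ i → lam i = 0)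
    (N' : ℕ) (hlen' : ∀ i, N' ≤ i → lam i = 0)
    (d : ℕ) (hd : ∀ i : ℕ, i < d ↔ i < lam i)
    (P Q : ℕ → ℕ)
    (hP : ∀ a, a < d → lam a = P a + a + 1)
    (hQ : ∀ a, a < d → {j : ℕ | a < lam j}.ncard = Q a + a + 1) :
    Matrix.det (Matrix.of fun i j : Fin N =>
        h ((lam i : ℤ) - (i : ℕ) + (j : ℕ)) (j : ℕ))
      = Matrix.det (Matrix.of fun a b : Fin d => genHookSchur h (P a) (Q b)) ∧
    Matrix.det (Matrix.of fun i j : Fin N =>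
        h ((lam i : ℤ) - (i : ℕ) + (j : ℕ)) (j : ℕ))
      = Matrix.det (Matrix.of fun i j : Fin N' =>
          h ((lam i : ℤ) - (i : ℕ) + (j : ℕ)) (j : ℕ)) := by
  classical
  have part2 : ∀ N₁ N₂ : ℕ, (∀ i, N₁ ≤ i → lam i = 0) → (∀ i, N₂ ≤ i → lam i = 0) →
      (JT h lam N₁).det = (JT h lam N₂).det := by
    intro N₁ N₂ h1 h2
    rw [← pad h h0 hneg lam N₁ h1 (max N₁ N₂) (le_max_left _ _),
        pad h h0 hneg lam N₂ h2 (max N₁ N₂) (le_max_right _ _)]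
  refine ⟨?_, part2 N N' hlen hlen'⟩
  -- lower-set description of Q
  have hQ' : ∀ a, a < d → ∀ j, (a < lam j ↔ j < Q a + a + 1) := by
    intro a ha j
    set F : Finset ℕ := (Finset.range N).filter (fun j => a < lam j) with hF
    have hmemF : ∀ x, x ∈ F ↔ a < lam x := by
      intro x
      rw [hF, Finset.mem_filter, Finset.mem_range]
      constructor
      · exact fun hx => hx.2
      · intro hx
        refine ⟨?_, hx⟩
        by_contra hc
        have := hlen x (by omega)
        omega
    have hsetF : {j : ℕ | a < lam j} = ↑F := by
      ext x
      simp only [Set.mem_setOf_eq, Finset.coe_filter, hmemF]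
      exact (hmemF x).symm
    have hcard : F.card = Q a + a + 1 := by
      have := hQ a ha
      rw [hsetF, Set.ncard_coe_finset] at this
      exact this
    have hFr : F = Finset.range F.card := by
      have hsub : Finset.range F.card ⊆ F := by
        intro k hk
        rw [Finset.mem_range] at hk
        by_contra hc
        have hsub2 : F ⊆ Finset.range k := by
          intro x hx
          rw [Finset.mem_range]
          by_contra hc2
          apply hc
          rw [hmemF]
          have hax : a < lam x := (hmemF x).mp hx
          have : lam x ≤ lam k := hmono (by omega)
          omega
        have := Finset.card_le_card hsub2
        rw [Finset.card_range] at this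
        omega
      apply (Finset.eq_of_subset_of_card_le hsub (by rw [Finset.card_range])).symm
    rw [← hmemF, hFr, Finset.mem_range, hcard]
  -- basic facts
  have hdn : ∀ a, a < d → a < N := by
    intro a ha
    have h1 : a < lam a := (hd a).mp ha
    by_contra hc
    have := hlen a (by omega)
    omega
  have hQK : ∀ b, b < d → Q b + b < N := by
    intro b hb
    have h1 : b < lam (Q b + b) := (hQ' b hb (Q b + b)).mpr (by omega)
    by_contra hc
    have := hlen (Q b + b) (by omega)
    omega
  have hQanti : ∀ a b, a < b → b < d → Q b < Q a := by
    intro a b hab hb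
    have ha : a < d := by omega
    have h1 : b < lam (Q b + b) := (hQ' b hb (Q b + b)).mpr (by omega)
    have h2 : a < lam (Q b + b) := by omega
    have h3 : Q b + b < Q a + a + 1 := (hQ' a ha (Q b + b)).mp h2
    omega
  have hlamle : ∀ m, d ≤ m → lam m ≤ m := by
    intro m hm
    have := (hd m).mpr
    omega
  have hcomp : ∀ m, d ≤ m → ∀ b, b < d → m - lam m ≠ Q b := by
    intro m hm b hb hc
    have h1 := hQ' b hb m
    have h2 : lam m ≤ m := hlamle m hm
    omega
  -- the permutation π
  set qF : Fin d → Fin N := fun b => ⟨Q b, by have := hQK b b.isLt; omega⟩ with hqF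
  have hqFinj : Function.Injective qF := by
    intro a b hab
    rw [hqF] at hab
    simp only [Fin.mk.injEq] at hab
    by_contra hc
    rcases Nat.lt_or_ge (a:ℕ) (b:ℕ) with h1 | h1
    · have := hQanti a b h1 b.isLt
      omega
    · have h2 : (b:ℕ) < (a:ℕ) := by
        rcases Nat.lt_or_ge (b:ℕ) (a:ℕ) with h3 | h3
        · exact h3
        · exact absurd (Fin.ext (by omega)) hc
      have := hQanti b a h2 a.isLt
      omega
  set f : Fin N → Fin N := fun m =>
    if hm : (m:ℕ) < d then qF ⟨(m:ℕ), hm⟩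
    else ⟨(m:ℕ) - lam m, by have := m.isLt; omega⟩ with hf
  have hinj : Function.Injective f := by
    intro x y hxy
    rw [hf] at hxy
    simp only at hxy
    by_cases hx : (x:ℕ) < d <;> by_cases hy : (y:ℕ) < d
    · rw [dif_pos hx, dif_pos hy] at hxy
      have := hqFinj hxy
      exact Fin.ext (by rw [Fin.ext_iff] at this; simpa using this)
    · rw [dif_pos hx, dif_neg hy] at hxy
      exfalso
      rw [hqF, Fin.ext_iff] at hxy
      simp only [Fin.val_mk] at hxy
      exact hcomp (y:ℕ) (by omega) (x:ℕ) hx hxy.symm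
    · rw [dif_neg hx, dif_pos hy] at hxy
      exfalso
      rw [hqF, Fin.ext_iff] at hxy
      simp only [Fin.val_mk] at hxy
      exact hcomp (x:ℕ) (by omega) (y:ℕ) hy hxy
    · rw [dif_neg hx, dif_neg hy] at hxy
      rw [Fin.ext_iff] at hxy
      simp only [Fin.val_mk] at hxy
      apply Fin.ext
      rcases Nat.lt_trichotomy (x:ℕ) (y:ℕ) with h1 | h1 | h1
      · have hle : lam (y:ℕ) ≤ lam (x:ℕ) := hmono (by omega)
        have := hlamle (x:ℕ) (by omega)
        omega
      · exact h1
      · have hle : lam (x:ℕ) ≤ lam (y:ℕ) := hmono (by omega)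
        have := hlamle (y:ℕ) (by omega)
        omega
  set π : Equiv.Perm (Fin N) := Equiv.ofBijective f
    ((Finite.injective_iff_bijective).mp hinj) with hπ
  have hπapp : ∀ x, π x = f x := fun x => rfl
  have hsignπ : Equiv.Perm.sign π = (-1 : ℤˣ) ^ (∑ b : Fin d, Q (b:ℕ)) := by
    apply sign_sorted d π (fun b : Fin d => Q (b:ℕ))
    · intro a b hab
      exact hQanti (a:ℕ) (b:ℕ) hab b.isLt
    · intro b
      exact hQK (b:ℕ) b.isLt
    · intro x hx
      rw [hπapp, hf]
      simp only [dif_pos hx]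
      rfl
    · intro x y hx hxy
      rw [Fin.lt_def, hπapp, hπapp, hf]
      simp only [dif_neg (by omega : ¬ (x:ℕ) < d), dif_neg (by
        have hxy' : (x:ℕ) < (y:ℕ) := hxy
        omega : ¬ (y:ℕ) < d)]
      have hxy' : (x:ℕ) < (y:ℕ) := hxy
      have hle : lam (y:ℕ) ≤ lam (x:ℕ) := hmono (by omega)
      have := hlamle (x:ℕ) (by omega)
      omega
  -- the matrix D
  set D : Matrix (Fin N) (Fin N) R := Matrix.of fun i j =>
    if hb : ∃ b : Fin d, qF b = i then vRow h N (P (hb.choose : ℕ)) j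
    else core h N i j with hD
  have hD1 : ∀ b : Fin d, D (qF b) = vRow h N (P (b:ℕ)) := by
    intro b
    funext j
    rw [hD]
    simp only [Matrix.of_apply]
    rw [dif_pos ⟨b, rfl⟩]
    have hch := (⟨b, rfl⟩ : ∃ b' : Fin d, qF b' = qF b).choose_spec
    have := hqFinj hch
    rw [this]
  have hD2 : ∀ i, (∀ b, qF b ≠ i) → D i = core h N i := by
    intro i hi
    funext j
    rw [hD]
    simp only [Matrix.of_apply]
    rw [dif_neg (by push_neg; exact fun b => hi b)]
  -- G = D.submatrix π id
  have hG : JT h lam N = D.submatrix π id := by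
    ext m j
    rw [Matrix.submatrix_apply, id, hπapp, hf]
    simp only
    by_cases hm : (m:ℕ) < d
    · rw [dif_pos hm]
      have := congrFun (hD1 ⟨(m:ℕ), hm⟩) j
      simp only [Fin.val_mk] at this
      rw [this]
      show h ((lam (m:ℕ) : ℤ) - (m:ℕ) + (j:ℕ)) (j:ℕ) = vRow h N (P (m:ℕ)) j
      rw [vRow, hP (m:ℕ) hm]
      congr 1
      push_cast
      ring
    · rw [dif_neg hm]
      have hnomem : ∀ b : Fin d, qF b ≠ ⟨(m:ℕ) - lam (m:ℕ), by have := m.isLt; omega⟩ := by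
        intro b hc
        rw [hqF, Fin.ext_iff] at hc
        simp only [Fin.val_mk] at hc
        exact hcomp (m:ℕ) (by omega) (b:ℕ) b.isLt hc.symm
      rw [congrFun (hD2 _ hnomem) j]
      show h ((lam (m:ℕ) : ℤ) - (m:ℕ) + (j:ℕ)) (j:ℕ) =
        h (((j:ℕ) : ℤ) - (((m:ℕ) - lam (m:ℕ) : ℕ) : ℤ)) (j:ℕ)
      congr 1
      have hle : lam (m:ℕ) ≤ (m:ℕ) := hlamle (m:ℕ) (by omega)
      push_cast [Nat.cast_sub hle]
      ring
  -- assemble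
  have hdetG : (JT h lam N).det = (-1:R) ^ (∑ b : Fin d, Q (b:ℕ)) * D.det := by
    rw [hG, Matrix.det_permute, hsignπ]
    norm_cast
  have hbazin := bazin (core h N) (core_det h h0 hneg N) qF hqFinj
    (fun b => vRow h N (P (b:ℕ))) D hD1 hD2
  have hQbN : ∀ b : Fin d, Q (b:ℕ) < N := fun b => by
    have := hQK (b:ℕ) b.isLt; omega
  have hRHS : Matrix.det (Matrix.of fun a b : Fin d => genHookSchur h (P (a:ℕ)) (Q (b:ℕ)))
      = (-1:R) ^ (∑ b : Fin d, Q (b:ℕ)) *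
        Matrix.det (Matrix.of fun a b : Fin d =>
          ((core h N).updateRow (qF b) (vRow h N (P (a:ℕ)))).det) := by
    have he : (Matrix.of fun a b : Fin d => genHookSchur h (P (a:ℕ)) (Q (b:ℕ)))
        = Matrix.of fun a b : Fin d => (-1:R)^(Q (b:ℕ)) *
            ((core h N).updateRow (qF b) (vRow h N (P (a:ℕ)))).det := by
      ext a b
      simp only [Matrix.of_apply]
      rw [hook_eq h h0 hneg (P (a:ℕ)) (Q (b:ℕ)) (hQbN b)]
    rw [he]
    rw [show (Matrix.of fun a b : Fin d => (-1:R)^(Q (b:ℕ)) *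
            ((core h N).updateRow (qF b) (vRow h N (P (a:ℕ)))).det)
        = Matrix.of fun a b : Fin d => (fun b : Fin d => (-1:R)^(Q (b:ℕ))) b *
            (Matrix.of fun a b : Fin d =>
              ((core h N).updateRow (qF b) (vRow h N (P (a:ℕ)))).det) a b from rfl]
    rw [Matrix.det_mul_row]
    rw [Finset.prod_pow_eq_pow_sum]
  show (JT h lam N).det = _
  rw [hdetG, hRHS, hbazin]
end
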